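/- Let X be a set, M : X → X, and s : ℕ → X → ℝ a subadditive cocycle (s_{n+m}(c) ≤ s_n(c) + s_m(M^n c)) with 0 ≤ s_n(c). Suppose β < α and n ≥ 1 are such that for every c ∈ X there exists 1 ≤ k ≤ n with s_k(c) ≤ β k. Then for every c and every m, s_m(c) ≤ β m + n. -/
import Mathlib


/-- If every configuration has some `k ≤ n` with `s k c ≤ β k`, then
`s m c ≤ β m + n` for all `m`. -/
theorem subadditive_cocycle_linear_bound
    {X : Type*} (M : X → X) (s : ℕ → X → ℝ)
    (h0 : ∀ n c, 0 ≤ s n c) (h1 : ∀ n c, s n c ≤ n)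
    (hsub : ∀ n m c, s (n + m) c ≤ s n c + s m (M^[n] c))
    (α β : ℝ) (hβα : β < α)
    (n : ℕ) (hn : 1 ≤ n)
    (hyp : ∀ c : X, ∃ k, 1 ≤ k ∧ k ≤ n ∧ s k c ≤ β * k) :
    ∀ (c : X) (m : ℕ), s m c ≤ β * m + n := by
  have hβ : ∀ c : X, 0 ≤ β := by
    intro c
    obtain ⟨k, hk1, _, hk⟩ := hyp c
    have hs := h0 k c
    have hk1' : (1 : ℝ) ≤ k := by exact_mod_cast hk1
    nlinarith
  intro c m
  induction m using Nat.strong_induction_on generalizing c with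
  | _ m ih =>
    rcases le_or_gt m n with hm | hm
    · have h1' := h1 m c
      have hmn : (m : ℝ) ≤ n := by exact_mod_cast hm
      nlinarith [hβ c, Nat.cast_nonneg (α := ℝ) m]
    · obtain ⟨k, hk1, hkn, hk⟩ := hyp c
      have hkm : k < m := lt_of_le_of_lt hkn hm
      have hs := hsub k (m - k) c
      rw [Nat.add_sub_cancel' hkm.le] at hs
      have ihh := ih (m - k) (by omega) (M^[k] c)
      have hcast : ((m - k : ℕ) : ℝ) = (m : ℝ) - k := by
        rw [Nat.cast_sub hkm.le]
      rw [hcast] at ihh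
      linarith
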